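/- Let L : ℂ^n → ℂ^n be a linear mapping and let M > 1 be a positive integer. Then L has a periodic point of period M if and only if there exist a positive integer s ≤ n and positive integers m_1, …, m_s such that M = [m_1, …, m_s] and L has eigenvalues λ_1, …, λ_s such that each λ_i is a primitive m_i-th root of unity. -/
import Mathlib


open Function

noncomputable section

/-- `lam` is a primitive `m`-th root of unity. -/
def PrimRoot (lam : ℂ) (m : ℕ) : Prop :=
  lam ^ m = 1 ∧ ∀ j : ℕ, 1 ≤ j → j < m → lam ^ j ≠ 1

/-- `p` is a periodic point of `f` of (exact) period `m`. -/
def PeriodicPtOfPeriod {X : Type*} (f : X → X) (m : ℕ) (p : X) : Prop :=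
  f^[m] p = p ∧ ∀ k : ℕ, 0 < k → k < m → f^[k] p ≠ p

lemma primRoot_dvd {lam : ℂ} {m k : ℕ} (h : PrimRoot lam m) (hm : 0 < m)
    (hk : lam ^ k = 1) : m ∣ k := by
  have h2 : lam ^ (k % m) = 1 := by
    conv at hk => rw [← Nat.mod_add_div k m]
    rwa [pow_add, pow_mul, h.1, one_pow, mul_one] at hk
  rcases Nat.eq_zero_or_pos (k % m) with h0 | hpos
  · exact Nat.dvd_of_mod_eq_zero h0
  · exact absurd h2 (h.2 _ hpos (Nat.mod_lt k hm))

lemma geom_zero {x : ℂ} {M : ℕ} (hx : x ^ M = 1) (h1 : x ≠ 1) :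
    ∑ t ∈ Finset.range M, x ^ t = 0 := by
  have h := geom_sum_mul x M
  rw [hx, sub_self] at h
  exact (mul_eq_zero.mp h).resolve_right (sub_ne_zero.mpr h1)

lemma sum_zmod_val {M : ℕ} [NeZero M] {β : Type*} [AddCommMonoid β] (g : ℕ → β) :
    ∑ j : ZMod M, g (ZMod.val j) = ∑ t ∈ Finset.range M, g t := by
  have himg : Finset.image ZMod.val (Finset.univ : Finset (ZMod M)) = Finset.range M := by
    ext t
    simp only [Finset.mem_image, Finset.mem_univ, true_and, Finset.mem_range]
    constructor
    · rintro ⟨j, rfl⟩; exact ZMod.val_lt j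
    · intro ht; exact ⟨(t : ZMod M), ZMod.val_natCast_of_lt ht⟩
  rw [← himg, Finset.sum_image]
  intro a _ b _ hab
  have h := congrArg (fun x : ℕ => (x : ZMod M)) hab
  simpa [ZMod.natCast_zmod_val] using h

theorem statement3 (n M : ℕ) (hM : 1 < M)
    (L : EuclideanSpace ℂ (Fin n) →ₗ[ℂ] EuclideanSpace ℂ (Fin n)) :
    (∃ p : EuclideanSpace ℂ (Fin n), PeriodicPtOfPeriod (fun x => L x) M p) ↔
      ∃ s : ℕ, 0 < s ∧ s ≤ n ∧ ∃ m : Fin s → ℕ,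
        (∀ i, 0 < m i) ∧ Finset.univ.lcm m = M ∧
        ∃ lam : Fin s → ℂ, ∀ i,
          Module.End.HasEigenvalue L (lam i) ∧ PrimRoot (lam i) (m i) := by
  classical
  have hM0 : M ≠ 0 := by omega
  have hMpos : 0 < M := by omega
  haveI : NeZero M := ⟨hM0⟩
  haveI : Fact (1 < M) := ⟨hM⟩
  have hMC : (M : ℂ) ≠ 0 := Nat.cast_ne_zero.mpr hM0
  have hiterate : ∀ (k : ℕ) (x : EuclideanSpace ℂ (Fin n)),
      (fun y => L y)^[k] x = (L ^ k) x := fun k x => (Module.End.pow_apply L k x).symm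
  constructor
  · rintro ⟨p, hp, hmin⟩
    rw [hiterate] at hp
    have hmin' : ∀ k : ℕ, 0 < k → k < M → (L ^ k) p ≠ p := by
      intro k h1 h2
      rw [← hiterate]
      exact hmin k h1 h2
    set ζ : ℂ := Complex.exp (2 * Real.pi * Complex.I / M) with hζdef
    have hζ : IsPrimitiveRoot ζ M := Complex.isPrimitiveRoot_exp M hM0
    have hζM : ζ ^ M = 1 := hζ.pow_eq_one
    have hζmod : ∀ t : ℕ, ζ ^ (t % M) = ζ ^ t := by
      intro t
      conv_rhs => rw [← Nat.mod_add_div t M]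
      rw [pow_add, pow_mul, hζM, one_pow, mul_one]
    set e : ZMod M → ℂ := fun k => ζ ^ k.val with hedef
    have he_add : ∀ a b : ZMod M, e (a + b) = e a * e b := by
      intro a b
      show ζ ^ (a + b).val = ζ ^ a.val * ζ ^ b.val
      rw [ZMod.val_add, hζmod, pow_add]
    have he_zero : e 0 = 1 := by
      show ζ ^ (0 : ZMod M).val = 1
      rw [ZMod.val_zero, pow_zero]
    have he_nsmul : ∀ (t : ℕ) (c : ZMod M), e (t • c) = e c ^ t := by
      intro t c
      induction t with
      | zero => simpa using he_zero
      | succ t ih => rw [succ_nsmul, he_add, ih, pow_succ]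
    have he_one : ∀ c : ZMod M, e c = 1 → c = 0 := by
      intro c hc
      have h1 : M ∣ c.val := (hζ.pow_eq_one_iff_dvd _).mp hc
      have h2 : c.val = 0 := Nat.eq_zero_of_dvd_of_lt h1 (ZMod.val_lt c)
      exact (ZMod.val_eq_zero c).mp h2
    have he_ne : ∀ c : ZMod M, c ≠ 0 → e c ≠ 1 := fun c hc h => hc (he_one c h)
    have he_M : ∀ c : ZMod M, e c ^ M = 1 := by
      intro c
      rw [← he_nsmul]
      have h : (M : ℕ) • c = 0 := by
        rw [nsmul_eq_mul, ZMod.natCast_self, zero_mul]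
      rw [h, he_zero]
    have he_nezero : ∀ c : ZMod M, e c ≠ 0 := by
      intro c h
      have h2 := he_M c
      rw [h] at h2
      simp [hM0] at h2
    have he_inj : Function.Injective e := by
      intro a b hab
      have h2 : e (a - b) * e b = e a := by rw [← he_add, sub_add_cancel]
      rw [hab] at h2
      have h3 : e (a - b) = 1 := by
        have := mul_right_cancel₀ (he_nezero b) (h2.trans (one_mul (e b)).symm)
        exact this
      have h4 := he_one _ h3
      rw [sub_eq_zero] at h4
      exact h4
    -- iterates of p
    have hMs : ∀ s : ℕ, (L ^ (M * s)) p = p := by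
      intro s
      induction s with
      | zero => simp
      | succ s ih => rw [Nat.mul_succ, pow_add, Module.End.mul_apply, hp, ih]
    have hpowmod : ∀ t : ℕ, (L ^ (t % M)) p = (L ^ t) p := by
      intro t
      conv_rhs => rw [← Nat.mod_add_div t M]
      rw [pow_add, Module.End.mul_apply, hMs]
    set q : ZMod M → EuclideanSpace ℂ (Fin n) := fun k => (L ^ k.val) p with hqdef
    have hq_succ : ∀ k : ZMod M, q (k + 1) = L (q k) := by
      intro k
      show (L ^ (k + 1).val) p = L ((L ^ k.val) p)
      have h1 : (k + 1).val = (k.val + 1) % M := by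
        rw [ZMod.val_add, ZMod.val_one]
      rw [h1, hpowmod, pow_succ', Module.End.mul_apply]
    set v : ZMod M → EuclideanSpace ℂ (Fin n) :=
      fun j => (M : ℂ)⁻¹ • ∑ k : ZMod M, e (-(j * k)) • q k with hvdef
    have hLv : ∀ j, L (v j) = e j • v j := by
      intro j
      have step1 : L (v j) = (M : ℂ)⁻¹ • ∑ k : ZMod M, e (-(j * k)) • L (q k) := by
        rw [hvdef]
        simp only [map_smul, map_sum]
      rw [step1]
      have step2 : ∑ k : ZMod M, e (-(j * k)) • L (q k)
          = ∑ k : ZMod M, e (-(j * k)) • q (k + 1) :=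
        Finset.sum_congr rfl fun k _ => by rw [hq_succ]
      rw [step2]
      have step3 : ∑ k : ZMod M, e (-(j * k)) • q (k + 1)
          = ∑ k : ZMod M, e (-(j * (k - 1))) • q k := by
        refine Fintype.sum_equiv (Equiv.addRight (1 : ZMod M)) _ _ fun k => ?_
        simp only [Equiv.coe_addRight, add_sub_cancel_right]
      rw [step3]
      have step4 : ∀ k : ZMod M, e (-(j * (k - 1))) = e j * e (-(j * k)) := by
        intro k
        have h : -(j * (k - 1)) = j + -(j * k) := by ring
        rw [h, he_add]
      calc (M : ℂ)⁻¹ • ∑ k : ZMod M, e (-(j * (k - 1))) • q k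
          = (M : ℂ)⁻¹ • ∑ k : ZMod M, e j • (e (-(j * k)) • q k) := by
            refine congrArg _ (Finset.sum_congr rfl fun k _ => ?_)
            rw [step4 k, mul_smul]
        _ = (M : ℂ)⁻¹ • e j • ∑ k : ZMod M, e (-(j * k)) • q k := by
            rw [← Finset.smul_sum]
        _ = e j • v j := smul_comm _ _ _
    have hsum_e : ∀ c : ZMod M, ∑ j : ZMod M, e (j * c) = if c = 0 then (M : ℂ) else 0 := by
      intro c
      have hrw : ∀ j : ZMod M, e (j * c) = e c ^ j.val := by
        intro j
        conv_lhs => rw [← ZMod.natCast_zmod_val j]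
        rw [← nsmul_eq_mul, he_nsmul]
      rw [Finset.sum_congr rfl fun j _ => hrw j]
      rw [sum_zmod_val (fun t => e c ^ t)]
      by_cases hc : c = 0
      · rw [if_pos hc, hc, he_zero]
        simp
      · rw [if_neg hc, geom_zero (he_M c) (he_ne c hc)]
    have hq0 : q 0 = p := by
      show (L ^ (0 : ZMod M).val) p = p
      rw [ZMod.val_zero, pow_zero, Module.End.one_apply]
    have hvsum : ∑ j : ZMod M, v j = p := by
      rw [hvdef]
      rw [← Finset.smul_sum, Finset.sum_comm]
      have h1 : ∀ k : ZMod M, ∑ j : ZMod M, e (-(j * k)) • q k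
          = (if k = 0 then (M : ℂ) else 0) • q k := by
        intro k
        rw [← Finset.sum_smul]
        congr 1
        have h2 : ∀ j : ZMod M, -(j * k) = j * (-k) := fun j => by ring
        rw [Finset.sum_congr rfl fun j _ => by rw [h2 j]]
        rw [hsum_e (-k)]
        simp [neg_eq_zero]
      rw [Finset.sum_congr rfl fun k _ => h1 k]
      simp only [ite_smul, zero_smul]
      rw [Finset.sum_ite_eq' Finset.univ (0 : ZMod M) (fun k => (M : ℂ) • q k)]
      simp only [Finset.mem_univ, if_true]
      rw [hq0, smul_smul, inv_mul_cancel₀ hMC, one_smul]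
    have hLtv : ∀ (t : ℕ) (j : ZMod M), (L ^ t) (v j) = e j ^ t • v j := by
      intro t j
      induction t with
      | zero => simp
      | succ t ih =>
        rw [pow_succ', Module.End.mul_apply, ih, map_smul, hLv, smul_smul, ← pow_succ]
    have hLtp : ∀ t : ℕ, (L ^ t) p = ∑ j : ZMod M, e j ^ t • v j := by
      intro t
      rw [← hvsum, map_sum]
      exact Finset.sum_congr rfl fun j _ => hLtv t j
    set S : Finset (ZMod M) := Finset.univ.filter (fun j => v j ≠ 0) with hSdef
    have hev : ∀ j ∈ S, Module.End.HasEigenvector L (e j) (v j) := by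
      intro j hj
      exact ⟨Module.End.mem_eigenspace_iff.mpr (hLv j), (Finset.mem_filter.mp hj).2⟩
    have hLI : LinearIndependent ℂ (fun j : S => v (j : ZMod M)) :=
      Module.End.eigenvectors_linearIndependent' L (fun j : S => e (j : ZMod M))
        (he_inj.comp Subtype.coe_injective) _ (fun j => hev _ j.2)
    have hiff : ∀ k : ℕ, (L ^ k) p = p ↔ ∀ j ∈ S, e j ^ k = 1 := by
      intro k
      constructor
      · intro hk
        have h1 : ∑ j ∈ S, (e j ^ k) • v j = ∑ j : ZMod M, (e j ^ k) • v j := by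
          rw [hSdef]
          refine Finset.sum_filter_of_ne fun j _ hne => ?_
          intro hv
          rw [hv, smul_zero] at hne
          exact hne rfl
        have h2 : ∑ j ∈ S, v j = ∑ j : ZMod M, v j := by
          rw [hSdef]
          exact Finset.sum_filter_of_ne fun j _ hne => hne
        have hzero : ∑ j ∈ S, (e j ^ k - 1) • v j = 0 := by
          simp only [sub_smul, one_smul, Finset.sum_sub_distrib]
          rw [h1, h2, ← hLtp k, hvsum, hk, sub_self]
        have hzero' : ∑ j : S, (e (j : ZMod M) ^ k - 1) • v (j : ZMod M) = 0 := by
          rw [Finset.sum_coe_sort S (fun j => (e j ^ k - 1) • v j)]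
          exact hzero
        intro j hj
        have h3 := Fintype.linearIndependent_iff.mp hLI
          (fun j : S => e (j : ZMod M) ^ k - 1) hzero' ⟨j, hj⟩
        exact sub_eq_zero.mp h3
      · intro h
        rw [hLtp k]
        conv_rhs => rw [← hvsum]
        refine Finset.sum_congr rfl fun j _ => ?_
        by_cases hv : v j = 0
        · rw [hv, smul_zero]
        · rw [h j (Finset.mem_filter.mpr ⟨Finset.mem_univ j, hv⟩), one_smul]
    have hSne : S.Nonempty := by
      by_contra hemp
      rw [Finset.not_nonempty_iff_eq_empty] at hemp
      have h1 : (L ^ 1) p = p := (hiff 1).mpr (by simp [hemp])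
      exact hmin' 1 one_pos hM (by simpa using h1)
    have hfin : ∀ j : ZMod M, IsOfFinOrder (e j) := fun j =>
      isOfFinOrder_iff_pow_eq_one.mpr ⟨M, hMpos, he_M j⟩
    set mf : ZMod M → ℕ := fun j => orderOf (e j) with hmf
    have hmfpos : ∀ j, 0 < mf j := fun j => (hfin j).orderOf_pos
    have hmfdvd : ∀ j, mf j ∣ M := fun j => orderOf_dvd_of_pow_eq_one (he_M j)
    have hprim : ∀ j, PrimRoot (e j) (mf j) := by
      intro j
      refine ⟨pow_orderOf_eq_one (e j), fun t ht1 htlt hone => ?_⟩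
      have h2 := orderOf_le_of_pow_eq_one (by omega : 0 < t) hone
      simp only [hmf] at htlt
      omega
    set c : ℕ := S.lcm mf with hc
    have hcdvd : c ∣ M := Finset.lcm_dvd fun j _ => hmfdvd j
    have hcpos : 0 < c := by
      rcases Nat.eq_zero_or_pos c with h0 | h
      · rw [h0] at hcdvd
        exact absurd (Nat.eq_zero_of_zero_dvd hcdvd) hM0
      · exact h
    have hLc : (L ^ c) p = p := (hiff c).mpr fun j hj =>
      orderOf_dvd_iff_pow_eq_one.mp (Finset.dvd_lcm hj)
    have hcM : c = M := by
      have hle : c ≤ M := Nat.le_of_dvd hMpos hcdvd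
      by_contra hne
      exact hmin' c hcpos (lt_of_le_of_ne hle hne) hLc
    have hcard : S.card ≤ n := by
      have h := hLI.fintype_card_le_finrank
      rwa [Fintype.card_coe, finrank_euclideanSpace_fin] at h
    set σ := S.equivFin with hσ
    refine ⟨S.card, Finset.card_pos.mpr hSne, hcard,
      fun i => mf ((σ.symm i : S) : ZMod M), fun i => hmfpos _, ?_,
      fun i => e ((σ.symm i : S) : ZMod M), fun i =>
        ⟨Module.End.hasEigenvalue_of_hasEigenvector (hev _ (σ.symm i).2), hprim _⟩⟩
    conv_rhs => rw [← hcM, hc]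
    apply Nat.dvd_antisymm
    · exact Finset.lcm_dvd fun i _ => Finset.dvd_lcm (σ.symm i).2
    · refine Finset.lcm_dvd fun j hj => ?_
      have h1 : mf j = mf ((σ.symm (σ ⟨j, hj⟩) : S) : ZMod M) := by
        rw [Equiv.symm_apply_apply]
      rw [h1]
      exact Finset.dvd_lcm (Finset.mem_univ (σ ⟨j, hj⟩))
  · rintro ⟨s, hs, hsn, m, hmpos, hlcm, lam, hlam⟩
    have hMdvd : ∀ i, m i ∣ M := fun i => hlcm ▸ Finset.dvd_lcm (Finset.mem_univ i)
    set u : ℂ → EuclideanSpace ℂ (Fin n) := fun μ =>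
      if h : Module.End.HasEigenvalue L μ then h.exists_hasEigenvector.choose else 0 with hu
    have huev : ∀ μ, Module.End.HasEigenvalue L μ → Module.End.HasEigenvector L μ (u μ) := by
      intro μ h
      have : u μ = h.exists_hasEigenvector.choose := by rw [hu]; simp [h]
      rw [this]
      exact h.exists_hasEigenvector.choose_spec
    set T : Finset ℂ := Finset.image lam Finset.univ with hT
    have hTev : ∀ μ ∈ T, Module.End.HasEigenvector L μ (u μ) := by
      intro μ hμ
      obtain ⟨i, _, rfl⟩ := Finset.mem_image.mp hμ
      exact huev _ (hlam i).1
    set p : EuclideanSpace ℂ (Fin n) := ∑ μ ∈ T, u μ with hpdef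
    have hLk : ∀ k : ℕ, (L ^ k) p = ∑ μ ∈ T, μ ^ k • u μ := by
      intro k
      rw [hpdef, map_sum]
      exact Finset.sum_congr rfl fun μ hμ => (hTev μ hμ).pow_apply k
    have hLI : LinearIndependent ℂ (fun μ : T => u (μ : ℂ)) :=
      Module.End.eigenvectors_linearIndependent' L (fun μ : T => (μ : ℂ))
        Subtype.coe_injective _ (fun μ => hTev _ μ.2)
    have hiff : ∀ k : ℕ, (L ^ k) p = p ↔ ∀ μ ∈ T, μ ^ k = 1 := by
      intro k
      constructor
      · intro hk
        have hzero : ∑ μ ∈ T, (μ ^ k - 1) • u μ = 0 := by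
          simp only [sub_smul, one_smul, Finset.sum_sub_distrib]
          rw [← hLk k, hk, hpdef, sub_self]
        have hzero' : ∑ μ : T, ((μ : ℂ) ^ k - 1) • u (μ : ℂ) = 0 := by
          rw [Finset.sum_coe_sort T (fun μ => (μ ^ k - 1) • u μ)]
          exact hzero
        intro μ hμ
        have h3 := Fintype.linearIndependent_iff.mp hLI
          (fun μ : T => (μ : ℂ) ^ k - 1) hzero' ⟨μ, hμ⟩
        exact sub_eq_zero.mp h3
      · intro h
        rw [hLk k, hpdef]
        exact Finset.sum_congr rfl fun μ hμ => by rw [h μ hμ, one_smul]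
    refine ⟨p, ?_, ?_⟩
    · rw [hiterate]
      refine (hiff M).mpr fun μ hμ => ?_
      obtain ⟨i, _, rfl⟩ := Finset.mem_image.mp hμ
      obtain ⟨t, ht⟩ := hMdvd i
      rw [ht, pow_mul, (hlam i).2.1, one_pow]
    · intro k hk1 hk2 hkp
      rw [hiterate] at hkp
      have hall := (hiff k).mp hkp
      have hdvd : M ∣ k := by
        rw [← hlcm]
        refine Finset.lcm_dvd fun i _ => ?_
        exact primRoot_dvd (hlam i).2 (hmpos i)
          (hall _ (Finset.mem_image.mpr ⟨i, Finset.mem_univ i, rfl⟩))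
      exact absurd (Nat.le_of_dvd hk1 hdvd) (not_le.mpr hk2)
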